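/- Fix r > 0, σ₁, σ₂, L > 0, and set x₁* = (-r, 0, …, 0), x₂* = (r, 0, …, 0) in ℝⁿ. Write x = (x₁, x̃) with x̃ ∈ ℝ^{n-1}, d₁(x) = ‖x - x₁*‖, d₂(x) = ‖x - x₂*‖, φ̃ᵢ(x) = arccos((σᵢ/L)dᵢ(x)) (defined when dᵢ(x) ≤ L/σᵢ), αᵢ(x) = ∠(x - xᵢ*, x₂* - x₁*), ψ(x) = π - (α₂(x) - α₁(x)). Then for x in the intersection of the closed balls B̄(xᵢ*, L/σᵢ) with x ∉ {x₁*, x₂*}, the equation φ̃₁(x) + φ̃₂(x) = ψ(x) holds if and only if (‖x‖² - r²)/(d₁(x)²·d₂(x)²) + σ₁σ₂/L² = √(1/d₁(x)² - σ₁²/L²)·√(1/d₂(x)² - σ₂²/L²). -/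

import Mathlib

open scoped RealInnerProductSpace
set_option maxHeartbeats 1000000


/-- With `x₁* = (-r,0,…,0)`, `x₂* = (r,0,…,0)`, `dᵢ(x) = ‖x - xᵢ*‖`,
`φ̃ᵢ(x) = arccos((σᵢ/L)dᵢ(x))`, `αᵢ(x) = ∠(x - xᵢ*, x₂* - x₁*)` and
`ψ(x) = π - (α₂(x) - α₁(x))`: for `x` in the intersection of the closed balls
`B̄(xᵢ*, L/σᵢ)` with `x ∉ {x₁*, x₂*}`, the equation `φ̃₁(x) + φ̃₂(x) = ψ(x)` holds iff
`(‖x‖² - r²)/(d₁²d₂²) + σ₁σ₂/L² = √(1/d₁² - σ₁²/L²)·√(1/d₂² - σ₂²/L²)`. -/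
theorem stmt_7 {n : ℕ} (r σ₁ σ₂ L : ℝ) (hr : 0 < r) (h1 : 0 < σ₁) (h2 : 0 < σ₂) (hL : 0 < L)
    (x₁s x₂s : EuclideanSpace ℝ (Fin (n + 1)))
    (hx1 : x₁s = EuclideanSpace.single 0 (-r)) (hx2 : x₂s = EuclideanSpace.single 0 r)
    (x : EuclideanSpace ℝ (Fin (n + 1)))
    (hb1 : ‖x - x₁s‖ ≤ L / σ₁) (hb2 : ‖x - x₂s‖ ≤ L / σ₂)
    (hne1 : x ≠ x₁s) (hne2 : x ≠ x₂s) :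
    (Real.arccos (σ₁ / L * ‖x - x₁s‖) + Real.arccos (σ₂ / L * ‖x - x₂s‖) =
        Real.pi - (InnerProductGeometry.angle (x - x₂s) (x₂s - x₁s) -
          InnerProductGeometry.angle (x - x₁s) (x₂s - x₁s))) ↔
      (‖x‖ ^ 2 - r ^ 2) / (‖x - x₁s‖ ^ 2 * ‖x - x₂s‖ ^ 2) + σ₁ * σ₂ / L ^ 2 =
        Real.sqrt (1 / ‖x - x₁s‖ ^ 2 - σ₁ ^ 2 / L ^ 2) *
          Real.sqrt (1 / ‖x - x₂s‖ ^ 2 - σ₂ ^ 2 / L ^ 2) := by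
  set u := x - x₁s with hu
  set v := x - x₂s with hv
  have hu0 : u ≠ 0 := sub_ne_zero.mpr hne1
  have hv0 : v ≠ 0 := sub_ne_zero.mpr hne2
  have hd1 : (0:ℝ) < ‖u‖ := norm_pos_iff.mpr hu0
  have hd2 : (0:ℝ) < ‖v‖ := norm_pos_iff.mpr hv0
  set a := σ₁ / L * ‖u‖ with ha
  set b := σ₂ / L * ‖v‖ with hb
  have ha0 : 0 ≤ a := by positivity
  have hb0 : 0 ≤ b := by positivity
  have ha1 : a ≤ 1 := by
    rw [ha]
    calc σ₁ / L * ‖u‖ ≤ σ₁ / L * (L / σ₁) := by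
          apply mul_le_mul_of_nonneg_left hb1 (by positivity)
      _ = 1 := by field_simp
  have hb1' : b ≤ 1 := by
    rw [hb]
    calc σ₂ / L * ‖v‖ ≤ σ₂ / L * (L / σ₂) := by
          apply mul_le_mul_of_nonneg_left hb2 (by positivity)
      _ = 1 := by field_simp
  -- inner product computation
  have hs : x₂s = -x₁s := by
    rw [hx1, hx2]
    ext i
    rw [PiLp.neg_apply, EuclideanSpace.single_apply, EuclideanSpace.single_apply]
    by_cases h : i = 0 <;> simp [h]
  have hnx1 : ‖x₁s‖ = r := by
    rw [hx1, EuclideanSpace.norm_single, norm_neg, Real.norm_of_nonneg hr.le]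
  have hinner : (inner ℝ u v : ℝ) = ‖x‖ ^ 2 - r ^ 2 := by
    rw [hu, hv, hs, sub_neg_eq_add, inner_sub_left, inner_add_right, inner_add_right,
      real_inner_comm x₁s x]
    have h1 : (inner ℝ x x : ℝ) = ‖x‖ ^ 2 := real_inner_self_eq_norm_sq x
    have h2 : (inner ℝ x₁s x₁s : ℝ) = ‖x₁s‖ ^ 2 := real_inner_self_eq_norm_sq x₁s
    rw [h1, h2, hnx1]; ring
  -- triangle angle sum
  set γ := InnerProductGeometry.angle u v with hγ
  have hsum := InnerProductGeometry.angle_add_angle_sub_add_angle_sub_eq_pi u hv0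
  have huv : u - v = x₂s - x₁s := by rw [hu, hv]; abel
  have hvu : v - u = -(x₂s - x₁s) := by rw [hu, hv]; abel
  rw [huv, hvu, InnerProductGeometry.angle_neg_right] at hsum
  have hψ : Real.pi - (InnerProductGeometry.angle v (x₂s - x₁s) -
      InnerProductGeometry.angle u (x₂s - x₁s)) = Real.pi - γ := by
    have : InnerProductGeometry.angle v (x₂s - x₁s) -
        InnerProductGeometry.angle u (x₂s - x₁s) = γ := by linarith
    rw [this]
  rw [hψ]
  -- cosine injectivity
  have hmem1 : Real.arccos a + Real.arccos b ∈ Set.Icc 0 Real.pi := by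
    constructor
    · exact add_nonneg (Real.arccos_nonneg a) (Real.arccos_nonneg b)
    · have := Real.arccos_le_pi_div_two.mpr ha0
      have := Real.arccos_le_pi_div_two.mpr hb0
      linarith
  have hmem2 : Real.pi - γ ∈ Set.Icc 0 Real.pi := by
    constructor
    · linarith [InnerProductGeometry.angle_le_pi u v]
    · linarith [InnerProductGeometry.angle_nonneg u v]
  have hiff : (Real.arccos a + Real.arccos b = Real.pi - γ) ↔
      Real.cos (Real.arccos a + Real.arccos b) = Real.cos (Real.pi - γ) :=
    (Real.injOn_cos.eq_iff hmem1 hmem2).symm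
  rw [hiff]
  -- compute both cosines
  have hcos1 : Real.cos (Real.arccos a + Real.arccos b) =
      a * b - Real.sqrt (1 - a ^ 2) * Real.sqrt (1 - b ^ 2) := by
    rw [Real.cos_add, Real.cos_arccos (by linarith) ha1, Real.cos_arccos (by linarith) hb1',
      Real.sin_arccos, Real.sin_arccos]
  have hcos2 : Real.cos (Real.pi - γ) = -((‖x‖ ^ 2 - r ^ 2) / (‖u‖ * ‖v‖)) := by
    rw [Real.cos_pi_sub, hγ, InnerProductGeometry.cos_angle, hinner]
  rw [hcos1, hcos2]
  -- rewrite the sqrt terms on the RHS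
  have hsq1 : Real.sqrt (1 / ‖u‖ ^ 2 - σ₁ ^ 2 / L ^ 2) = Real.sqrt (1 - a ^ 2) / ‖u‖ := by
    have h : 1 / ‖u‖ ^ 2 - σ₁ ^ 2 / L ^ 2 = (1 - a ^ 2) / ‖u‖ ^ 2 := by
      rw [ha]; field_simp
    rw [h, Real.sqrt_div' (1 - a ^ 2) (sq_nonneg ‖u‖), Real.sqrt_sq hd1.le]
  have hsq2 : Real.sqrt (1 / ‖v‖ ^ 2 - σ₂ ^ 2 / L ^ 2) = Real.sqrt (1 - b ^ 2) / ‖v‖ := by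
    have h : 1 / ‖v‖ ^ 2 - σ₂ ^ 2 / L ^ 2 = (1 - b ^ 2) / ‖v‖ ^ 2 := by
      rw [hb]; field_simp
    rw [h, Real.sqrt_div' (1 - b ^ 2) (sq_nonneg ‖v‖), Real.sqrt_sq hd2.le]
  rw [hsq1, hsq2]
  have hab : a * b * L ^ 2 = σ₁ * σ₂ * (‖u‖ * ‖v‖) := by rw [ha, hb]; field_simp
  have hd1' := hd1.ne'
  have hd2' := hd2.ne'
  have hL' := hL.ne'
  constructor
  · intro h
    field_simp at h ⊢
    linear_combination L ^ 2 * h - (‖u‖ * ‖v‖) * hab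
  · intro h
    field_simp at h ⊢
    apply mul_left_cancel₀ (show (L ^ 2 * (‖u‖ * ‖v‖) : ℝ) ≠ 0 by positivity)
    linear_combination (‖u‖ * ‖v‖) * h + (‖u‖ ^ 2 * ‖v‖ ^ 2) * hab
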